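/- Let d₁, d₂ > 1 be coprime with d₁ odd, P(θ) = cos(d₁θ), and Q(θ) a trigonometric polynomial of the form Σ_{l} (c_l cos(l d₂ θ) + f_l sin(l d₂ θ)) with c_l = f_l = 0 whenever d₁ ∣ l. For any real polynomial R set Q̃(θ) = Q(θ) + R(cos(d₂θ)). Then ∫_0^{2π} Q̃(θ)^i P'(θ) dθ = 0 for all i ≥ 0. -/

import Mathlib

open Real intervalIntegral

theorem modified_Q_moments_vanish
    (d₁ d₂ : ℕ) (hd₁ : 1 < d₁) (hd₂ : 1 < d₂) (hodd : Odd d₁)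
    (hcop : Nat.Coprime d₁ d₂)
    (r : ℕ) (c f : ℕ → ℝ)
    (hQ : ∀ l, d₁ ∣ l → c l = 0 ∧ f l = 0)
    (R : Polynomial ℝ) :
    ∀ i : ℕ,
      ∫ θ in (0:ℝ)..(2 * π),
        ((∑ l ∈ Finset.range (r + 1),
            (c l * Real.cos (l * d₂ * θ) + f l * Real.sin (l * d₂ * θ)))
          + R.eval (Real.cos (d₂ * θ))) ^ i *
        (-(d₁ : ℝ) * Real.sin (d₁ * θ)) = 0 := by
  intro i
  have hd₂0 : (d₂ : ℝ) ≠ 0 := by positivity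
  set Qt : ℝ → ℝ := fun θ =>
    (∑ l ∈ Finset.range (r + 1),
        (c l * Real.cos (l * d₂ * θ) + f l * Real.sin (l * d₂ * θ)))
      + R.eval (Real.cos (d₂ * θ)) with hQt
  set T : ℝ := 2 * π / d₂ with hT
  set α : ℝ := d₁ * T with hα
  have hQtcont : Continuous Qt := by
    apply Continuous.add
    · exact continuous_finset_sum _ fun l _ => by fun_prop
    · exact (Polynomial.continuous R).comp (by fun_prop)
  -- Qt is T-periodic
  have hQtT : ∀ θ, Qt (θ + T) = Qt θ := by
    intro θ
    simp only [hQt]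
    congr 1
    · apply Finset.sum_congr rfl
      intro l _
      have h1 : (l : ℝ) * d₂ * (θ + T) = l * d₂ * θ + l * (2 * π) := by
        rw [hT]; field_simp
      rw [h1, Real.cos_add_nat_mul_two_pi, Real.sin_add_nat_mul_two_pi]
    · have h1 : (d₂ : ℝ) * (θ + T) = d₂ * θ + 2 * π := by
        rw [hT]; field_simp
      rw [h1, Real.cos_add_two_pi]
  -- Qt is 2π-periodic
  have hQt2π : ∀ θ, Qt (θ + 2 * π) = Qt θ := by
    intro θ
    simp only [hQt]
    congr 1
    · apply Finset.sum_congr rfl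
      intro l _
      have h1 : (l : ℝ) * d₂ * (θ + 2 * π) = l * d₂ * θ + (l * d₂ : ℕ) * (2 * π) := by
        push_cast; ring
      rw [h1, Real.cos_add_nat_mul_two_pi, Real.sin_add_nat_mul_two_pi]
    · have h1 : (d₂ : ℝ) * (θ + 2 * π) = d₂ * θ + (d₂ : ℕ) * (2 * π) := by
        push_cast; ring
      rw [h1, Real.cos_add_nat_mul_two_pi]
  have hd₁T : ∀ θ, (d₁ : ℝ) * (θ + T) = d₁ * θ + α := by
    intro θ; rw [hα]; ring
  have hd₁2π : ∀ θ, (d₁ : ℝ) * (θ + 2 * π) = d₁ * θ + (d₁ : ℕ) * (2 * π) := by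
    intro θ; push_cast; ring
  set I : ℝ := ∫ θ in (0:ℝ)..(2 * π), Qt θ ^ i * (-(d₁ : ℝ) * Real.sin (d₁ * θ)) with hI
  set J : ℝ := ∫ θ in (0:ℝ)..(2 * π), Qt θ ^ i * (-(d₁ : ℝ) * Real.cos (d₁ * θ)) with hJ
  -- integrability
  have hcontS : Continuous fun θ => Qt θ ^ i * (-(d₁ : ℝ) * Real.sin (d₁ * θ)) := by fun_prop
  have hcontC : Continuous fun θ => Qt θ ^ i * (-(d₁ : ℝ) * Real.cos (d₁ * θ)) := by fun_prop
  have hintS : IntervalIntegrable (fun θ => Qt θ ^ i * (-(d₁ : ℝ) * Real.sin (d₁ * θ)))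
      MeasureTheory.volume 0 (2 * π) := hcontS.intervalIntegrable _ _
  have hintC : IntervalIntegrable (fun θ => Qt θ ^ i * (-(d₁ : ℝ) * Real.cos (d₁ * θ)))
      MeasureTheory.volume 0 (2 * π) := hcontC.intervalIntegrable _ _
  -- shift lemma: for any continuous 2π-periodic g, ∫_0^{2π} g(θ+T) = ∫_0^{2π} g
  have shift : ∀ g : ℝ → ℝ, Function.Periodic g (2 * π) → Continuous g →
      (∫ θ in (0:ℝ)..(2 * π), g (θ + T)) = ∫ θ in (0:ℝ)..(2 * π), g θ := by
    intro g hper hcont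
    rw [intervalIntegral.integral_comp_add_right]
    have := hper.intervalIntegral_add_eq T 0
    simpa [zero_add, add_comm] using this
  have hperS : Function.Periodic (fun θ => Qt θ ^ i * (-(d₁ : ℝ) * Real.sin (d₁ * θ))) (2 * π) := by
    intro θ
    simp only [hQt2π, hd₁2π, Real.sin_add_nat_mul_two_pi]
  have hperC : Function.Periodic (fun θ => Qt θ ^ i * (-(d₁ : ℝ) * Real.cos (d₁ * θ))) (2 * π) := by
    intro θ
    simp only [hQt2π, hd₁2π, Real.cos_add_nat_mul_two_pi]
  -- rotation equations
  have hIeq : I = Real.cos α * I + Real.sin α * J := by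
    have h1 := shift _ hperS hcontS
    have h2 : ∀ θ : ℝ, Qt (θ + T) ^ i * (-(d₁ : ℝ) * Real.sin (d₁ * (θ + T)))
        = Real.cos α * (Qt θ ^ i * (-(d₁ : ℝ) * Real.sin (d₁ * θ)))
          + Real.sin α * (Qt θ ^ i * (-(d₁ : ℝ) * Real.cos (d₁ * θ))) := by
      intro θ
      rw [hQtT, hd₁T, Real.sin_add]; ring
    calc I = ∫ θ in (0:ℝ)..(2 * π), Qt (θ + T) ^ i * (-(d₁ : ℝ) * Real.sin (d₁ * (θ + T))) :=
            (h1).symm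
      _ = ∫ θ in (0:ℝ)..(2 * π),
            (Real.cos α * (Qt θ ^ i * (-(d₁ : ℝ) * Real.sin (d₁ * θ)))
              + Real.sin α * (Qt θ ^ i * (-(d₁ : ℝ) * Real.cos (d₁ * θ)))) := by
            apply intervalIntegral.integral_congr; intro θ _; exact h2 θ
      _ = Real.cos α * I + Real.sin α * J := by
            rw [intervalIntegral.integral_add (hintS.const_mul _) (hintC.const_mul _),
              intervalIntegral.integral_const_mul, intervalIntegral.integral_const_mul]
  have hJeq : J = Real.cos α * J - Real.sin α * I := by
    have h1 := shift _ hperC hcontC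
    have h2 : ∀ θ : ℝ, Qt (θ + T) ^ i * (-(d₁ : ℝ) * Real.cos (d₁ * (θ + T)))
        = Real.cos α * (Qt θ ^ i * (-(d₁ : ℝ) * Real.cos (d₁ * θ)))
          - Real.sin α * (Qt θ ^ i * (-(d₁ : ℝ) * Real.sin (d₁ * θ))) := by
      intro θ
      rw [hQtT, hd₁T, Real.cos_add]; ring
    calc J = ∫ θ in (0:ℝ)..(2 * π), Qt (θ + T) ^ i * (-(d₁ : ℝ) * Real.cos (d₁ * (θ + T))) :=
            (h1).symm
      _ = ∫ θ in (0:ℝ)..(2 * π),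
            (Real.cos α * (Qt θ ^ i * (-(d₁ : ℝ) * Real.cos (d₁ * θ)))
              - Real.sin α * (Qt θ ^ i * (-(d₁ : ℝ) * Real.sin (d₁ * θ)))) := by
            apply intervalIntegral.integral_congr; intro θ _; exact h2 θ
      _ = Real.cos α * J - Real.sin α * I := by
            rw [intervalIntegral.integral_sub (hintC.const_mul _) (hintS.const_mul _),
              intervalIntegral.integral_const_mul, intervalIntegral.integral_const_mul]
  -- cos α ≠ 1
  have hcos : Real.cos α ≠ 1 := by
    intro h
    rw [Real.cos_eq_one_iff] at h
    obtain ⟨n, hn⟩ := h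
    have hα' : α = 2 * π * d₁ / d₂ := by rw [hα, hT]; ring
    have hπ : (2 * π : ℝ) ≠ 0 := by positivity
    have h2 : (2 * π) * ((n : ℝ) * d₂) = (2 * π) * d₁ := by
      rw [hα'] at hn
      field_simp at hn
      rw [hn]
    have h3 : (n : ℝ) * d₂ = d₁ := mul_left_cancel₀ hπ h2
    have h4 : (n : ℤ) * (d₂ : ℤ) = (d₁ : ℤ) := by exact_mod_cast h3
    have hdvd : (d₂ : ℤ) ∣ (d₁ : ℤ) := ⟨n, by linarith [h4, mul_comm (n : ℤ) (d₂ : ℤ)]⟩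
    have hdvd' : d₂ ∣ d₁ := Int.natCast_dvd_natCast.mp hdvd
    have : d₂ ∣ Nat.gcd d₁ d₂ := Nat.dvd_gcd hdvd' dvd_rfl
    rw [hcop] at this
    have := Nat.le_of_dvd one_pos this
    omega
  -- conclude
  have e1 : (1 - Real.cos α) * I = Real.sin α * J := by linarith
  have e2 : (1 - Real.cos α) * J = -(Real.sin α * I) := by linarith
  have e3 : (1 - Real.cos α) * ((1 - Real.cos α) * I)
      = Real.sin α * ((1 - Real.cos α) * J) := by rw [e1]; ring
  rw [e2] at e3
  have e4 : ((1 - Real.cos α) ^ 2 + Real.sin α ^ 2) * I = 0 := by linear_combination e3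
  have key : (2 - 2 * Real.cos α) * I = 0 := by
    linear_combination e4 - I * (Real.sin_sq_add_cos_sq α)
  have hc1 : Real.cos α < 1 := lt_of_le_of_ne (Real.cos_le_one α) hcos
  have hIzero : I = 0 := by
    have h2 : (2 - 2 * Real.cos α) ≠ 0 := by linarith
    exact (mul_eq_zero.mp key).resolve_left h2
  simpa [hI, hQt] using hIzero
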